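/- Derivative formula over {a,b} with a ≥ 3: if u·x·v is a smooth word over {a,b} (3 ≤ a < b) with x in D_{a,b} = {ε, a, b, aa, bb, ab, ba}, then there exists w ∈ D_{a,b} such that D(uxv) = D(u)·w·D(v). -/

import Mathlib

/-- Run-length encoding Δ: the list of lengths of maximal runs. -/
def rle (w : List ℕ) : List ℕ := (w.splitBy (· == ·)).map List.length

/-- Trim the first entry if it is less than `b`. -/
def trimF (b : ℕ) : List ℕ → List ℕ
  | [] => []
  | x :: xs => if x < b then xs else x :: xs

/-- The derivative D: run lengths, dropping boundary runs shorter than `b`. -/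
def derW (b : ℕ) (w : List ℕ) : List ℕ :=
  (trimF b ((trimF b (rle w)).reverse)).reverse

/-- `w` is a word over the alphabet `{a, b}`. -/
def WordOver (a b : ℕ) (w : List ℕ) : Prop := ∀ c ∈ w, c = a ∨ c = b

/-- `w` is differentiable: all runs have length at most `b`, and all
interior runs have length exactly `a` or `b`. -/
def DiffW (a b : ℕ) (w : List ℕ) : Prop :=
  (∀ t ∈ rle w, t ≤ b) ∧ (∀ t ∈ ((rle w).drop 1).dropLast, t = a ∨ t = b)

/-- The closure ŵ: extend the first (resp. last) run to length `b`
if its length is strictly greater than `a`. -/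
def clos (a b : ℕ) (w : List ℕ) : List ℕ :=
  (if a < (rle w).headD 0 then List.replicate (b - (rle w).headD 0) (w.headD 0) else [])
    ++ w ++
  (if a < (rle w).getLastD 0 then List.replicate (b - (rle w).getLastD 0) (w.getLastD 0) else [])

/-- ρ(w) = D(ŵ). -/
def rhoW (a b : ℕ) (w : List ℕ) : List ℕ := derW b (clos a b w)

/-- `w` is a smooth (C^∞_{a,b}) word: it is a word over `{a,b}`, every iterated
closure is differentiable, and iterating ρ eventually yields the empty word. -/
def SmoothW (a b : ℕ) (w : List ℕ) : Prop :=
  WordOver a b w ∧ (∀ k : ℕ, DiffW a b (clos a b ((rhoW a b)^[k] w))) ∧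
    ∃ k : ℕ, (rhoW a b)^[k] w = []

/-- n-th power of a word (n-fold concatenation). -/
def lpow (u : List ℕ) (n : ℕ) : List ℕ := (List.replicate n u).flatten

/-- The pseudo-inverse Δ_α^{-1}: maps u₁u₂u₃⋯ to α^{u₁} β^{u₂} α^{u₃} ⋯ . -/
def dinv (α β : ℕ) : List ℕ → List ℕ
  | [] => []
  | t :: ts => List.replicate t α ++ dinv β α ts



def fromRuns (R : List (ℕ × ℕ)) : List ℕ := (R.map (fun p => List.replicate p.2 p.1)).flatten

def GoodR (R : List (ℕ × ℕ)) : Prop :=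
  (∀ p ∈ R, 0 < p.2) ∧ R.Chain' (fun p q => p.1 ≠ q.1)

@[simp] lemma fromRuns_nil : fromRuns [] = [] := rfl
@[simp] lemma fromRuns_cons (p R) :
    fromRuns (p :: R) = List.replicate p.2 p.1 ++ fromRuns R := rfl
@[simp] lemma fromRuns_append (R S) : fromRuns (R ++ S) = fromRuns R ++ fromRuns S := by
  simp [fromRuns]

private theorem splitBy_loop_eq_append {r : ℕ → ℕ → Bool} {l : List ℕ} {a : ℕ} {g : List ℕ}
    (gs : List (List ℕ)) :
    List.splitBy.loop r l a g gs = gs.reverse ++ List.splitBy.loop r l a g [] := by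
  induction l generalizing a g gs with
  | nil => simp [List.splitBy.loop]
  | cons b l IH =>
    simp_rw [List.splitBy.loop]
    split <;> rw [IH]
    conv_rhs => rw [IH]
    simp

private lemma splitBy_loop_replicate (k : ℕ) (c : ℕ) (rest g : List ℕ) :
    List.splitBy.loop (· == ·) (List.replicate k c ++ rest) c g [] =
      List.splitBy.loop (· == ·) rest c (List.replicate k c ++ g) [] := by
  induction k generalizing g with
  | zero => simp
  | succ k IH =>
    rw [List.replicate_succ, List.cons_append, List.splitBy.loop]
    simp only [beq_self_eq_true]
    rw [IH]
    congr 1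
    rw [← List.singleton_append, ← List.append_assoc, ← List.replicate_succ',
      List.replicate_succ, List.cons_append]

lemma splitBy_replicate_append (k : ℕ) (c : ℕ) (rest : List ℕ)
    (hk : 0 < k) (hrest : ∀ d ∈ rest.head?, d ≠ c) :
    (List.replicate k c ++ rest).splitBy (· == ·) =
      List.replicate k c :: rest.splitBy (· == ·) := by
  obtain ⟨k, rfl⟩ := Nat.exists_eq_succ_of_ne_zero hk.ne'
  rw [List.replicate_succ, List.cons_append]
  show List.splitBy.loop _ (List.replicate k c ++ rest) c [] [] = _
  rw [splitBy_loop_replicate k c rest []]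
  rw [List.append_nil]
  have hrep : List.replicate k c ++ [c] = c :: List.replicate k c := by
    rw [← List.replicate_succ', List.replicate_succ]
  cases rest with
  | nil => simp [List.splitBy.loop, hrep]
  | cons d l =>
    have hdc : (c == d) = false := by
      simpa using (hrest d rfl).symm
    rw [List.splitBy.loop]
    simp only [hdc]
    rw [splitBy_loop_eq_append]
    simp only [List.reverse_cons, List.reverse_replicate, List.reverse_nil, List.nil_append,
      List.singleton_append, hrep]
    rfl

@[simp] lemma head?_fromRuns_cons (c k : ℕ) (R) (hk : 0 < k) :
    (fromRuns ((c, k) :: R)).head? = some c := by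
  obtain ⟨k, rfl⟩ := Nat.exists_eq_succ_of_ne_zero hk.ne'
  simp [List.replicate_succ]

lemma splitBy_fromRuns (R : List (ℕ × ℕ)) (hR : GoodR R) :
    (fromRuns R).splitBy (· == ·) = R.map (fun p => List.replicate p.2 p.1) := by
  induction R with
  | nil => simp [fromRuns]
  | cons p R IH =>
    obtain ⟨c, k⟩ := p
    obtain ⟨h1, h2⟩ := hR
    have hk : 0 < k := h1 (c, k) (by simp)
    rw [fromRuns_cons, List.map_cons]
    rw [splitBy_replicate_append k c _ hk, IH ⟨fun q hq => h1 q (by simp [hq]), h2.tail⟩]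
    intro d hd
    cases R with
    | nil => simp at hd
    | cons q R' =>
      have hq : 0 < q.2 := h1 q (by simp)
      rw [head?_fromRuns_cons q.1 q.2 R' hq] at hd
      have := (List.isChain_cons_cons.mp h2).1
      simp at hd
      omega

lemma rle_fromRuns (R : List (ℕ × ℕ)) (hR : GoodR R) :
    rle (fromRuns R) = R.map Prod.snd := by
  rw [rle, splitBy_fromRuns R hR]
  simp



def toRuns : List ℕ → List (ℕ × ℕ)
  | [] => []
  | c :: cs => match toRuns cs with
    | [] => [(c, 1)]
    | (d, k) :: R => if c = d then (c, k + 1) :: R else (c, 1) :: (d, k) :: R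

lemma toRuns_spec (w : List ℕ) : fromRuns (toRuns w) = w ∧ GoodR (toRuns w) ∧
    (∀ c cs, w = c :: cs → ∃ k R, 0 < k ∧ toRuns w = (c, k) :: R) := by
  induction w with
  | nil => exact ⟨rfl, ⟨by simp [toRuns], by simp [toRuns, List.Chain']⟩, by simp⟩
  | cons c cs IH =>
    obtain ⟨IH1, ⟨IHp, IHc⟩, IHh⟩ := IH
    cases hcs : toRuns cs with
    | nil =>
      rw [hcs] at IH1
      simp at IH1
      refine ⟨?_, ⟨?_, ?_⟩, ?_⟩ <;>
        simp_all [toRuns, GoodR, List.Chain']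
    | cons p R =>
      obtain ⟨d, k⟩ := p
      rw [hcs] at IH1 IHp IHc
      have hk : 0 < k := IHp (d, k) (by simp)
      by_cases hcd : c = d
      · subst hcd
        have ht : toRuns (c :: cs) = (c, k + 1) :: R := by
          simp [toRuns, hcs]
        refine ⟨?_, ⟨?_, ?_⟩, ?_⟩
        · rw [ht]; simp only [fromRuns_cons] at IH1 ⊢
          rw [← IH1]; simp [List.replicate_succ]
        · rw [ht]; intro q hq
          rcases List.mem_cons.mp hq with h | h
          · subst h; simp
          · exact IHp q (by simp [h])
        · rw [ht]
          exact List.isChain_cons.mpr ⟨fun y hy => (List.isChain_cons.mp IHc).1 y hy,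
            (List.isChain_cons.mp IHc).2⟩
        · rintro e es ⟨rfl, rfl⟩; exact ⟨k + 1, R, by omega, ht⟩
      · have ht : toRuns (c :: cs) = (c, 1) :: (d, k) :: R := by
          simp [toRuns, hcs, hcd]
        refine ⟨?_, ⟨?_, ?_⟩, ?_⟩
        · rw [ht]; simp only [fromRuns_cons] at IH1 ⊢
          rw [← IH1]; simp
        · rw [ht]; intro q hq
          rcases List.mem_cons.mp hq with h | h
          · subst h; simp
          · exact IHp q h
        · rw [ht]; exact List.isChain_cons_cons.mpr ⟨hcd, IHc⟩
        · rintro e es ⟨rfl, rfl⟩; exact ⟨1, (d, k) :: R, one_pos, ht⟩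

lemma exists_runs (w : List ℕ) : ∃ R, GoodR R ∧ w = fromRuns R :=
  ⟨toRuns w, (toRuns_spec w).2.1, ((toRuns_spec w).1).symm⟩

lemma exists_runs_ne (w : List ℕ) (hw : w ≠ []) :
    ∃ c n R, GoodR ((c, n) :: R) ∧ 0 < n ∧ w = fromRuns ((c, n) :: R) := by
  cases w with
  | nil => exact absurd rfl hw
  | cons c cs =>
    obtain ⟨k, R, hk, ht⟩ := (toRuns_spec (c :: cs)).2.2 c cs rfl
    refine ⟨c, k, R, ?_, hk, ?_⟩
    · rw [← ht]; exact (toRuns_spec _).2.1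
    · rw [← ht, (toRuns_spec _).1]

-- reversal
lemma fromRuns_reverse (R) : (fromRuns R).reverse = fromRuns R.reverse := by
  induction R with
  | nil => simp
  | cons p R IH => simp [IH]

lemma goodR_reverse {R} (h : GoodR R) : GoodR R.reverse :=
  ⟨fun p hp => h.1 p (List.mem_reverse.mp hp),
    List.isChain_reverse.mpr (by
      have := h.2
      apply List.IsChain.imp _ this
      intro p q hpq
      exact fun hh => hpq hh.symm)⟩

lemma rle_reverse (w : List ℕ) : rle w.reverse = (rle w).reverse := by
  obtain ⟨R, hR, rfl⟩ := exists_runs w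
  rw [fromRuns_reverse, rle_fromRuns _ hR, rle_fromRuns _ (goodR_reverse hR), List.map_reverse]



def trimL (b : ℕ) (s : List ℕ) : List ℕ := (trimF b s.reverse).reverse

@[simp] lemma trimF_nil (b : ℕ) : trimF b [] = [] := rfl
lemma trimF_cons (b p : ℕ) (s : List ℕ) :
    trimF b (p :: s) = if p < b then s else p :: s := rfl
@[simp] lemma trimL_nil (b : ℕ) : trimL b [] = [] := by simp [trimL]

lemma trimF_append (b : ℕ) (s r : List ℕ) (hs : s ≠ []) :
    trimF b (s ++ r) = trimF b s ++ r := by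
  cases s with
  | nil => exact absurd rfl hs
  | cons p s => simp only [List.cons_append, trimF_cons]; split <;> simp

lemma trimL_concat (b : ℕ) (s : List ℕ) (p : ℕ) :
    trimL b (s ++ [p]) = s ++ (if p < b then [] else [p]) := by
  simp only [trimL, List.reverse_append, List.reverse_cons, List.reverse_nil, List.nil_append,
    List.cons_append, trimF_cons]
  split <;> simp

lemma trimL_append (b : ℕ) (s t : List ℕ) (ht : t ≠ []) :
    trimL b (s ++ t) = s ++ trimL b t := by
  simp only [trimL, List.reverse_append]
  rw [trimF_append _ _ _ (by simpa using ht)]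
  simp

lemma trimL_cons (b m : ℕ) (t : List ℕ) (ht : t ≠ []) :
    trimL b (m :: t) = m :: trimL b t := by
  simpa using trimL_append b [m] t ht

lemma trimL_singleton (b p : ℕ) : trimL b [p] = if p < b then [] else [p] := by
  simpa using trimL_concat b [] p

lemma derW_eq (b : ℕ) (w : List ℕ) : derW b w = trimL b (trimF b (rle w)) := rfl

@[simp] lemma derW_nil (b : ℕ) : derW b [] = [] := rfl

lemma trimF_trimL_comm (b : ℕ) (s : List ℕ) : trimF b (trimL b s) = trimL b (trimF b s) := by
  cases s with
  | nil => simp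
  | cons p s =>
    rcases List.eq_nil_or_concat s with rfl | ⟨s', q, rfl⟩
    · rw [trimL_singleton, trimF_cons]
      split <;> simp [trimL_singleton, trimF_cons, *]
    · rw [List.concat_eq_append]
      have h1 : trimL b (p :: (s' ++ [q])) = p :: (s' ++ if q < b then [] else [q]) := by
        rw [trimL_cons _ _ _ (by simp), trimL_concat]
      rw [h1, trimF_cons, trimF_cons]
      split
      · rw [trimL_append _ _ _ (by simp : ([q]:List ℕ) ≠ []), trimL_singleton]
      · rw [trimL_cons _ _ _ (by simp), trimL_append _ _ _ (by simp : ([q]:List ℕ) ≠ []),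
          trimL_singleton]

lemma derW_reverse (b : ℕ) (w : List ℕ) : derW b w.reverse = (derW b w).reverse := by
  rw [derW_eq, derW_eq, rle_reverse]
  show trimL b (trimF b (rle w).reverse) = _
  rw [show trimF b (rle w).reverse = (trimL b (rle w)).reverse from by simp [trimL]]
  rw [show trimL b (trimL b (rle w)).reverse = (trimF b (trimL b (rle w))).reverse from by
    simp [trimL]]
  rw [trimF_trimL_comm]



lemma headD_fromRuns (c n : ℕ) (R) (hn : 0 < n) : (fromRuns ((c, n) :: R)).headD 0 = c := by
  obtain ⟨n, rfl⟩ := Nat.exists_eq_succ_of_ne_zero hn.ne'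
  simp [List.replicate_succ]

lemma getLastD_eq_reverse_headD (l : List ℕ) : l.getLastD 0 = l.reverse.headD 0 := by
  induction l using List.reverseRecOn with
  | nil => simp
  | append_singleton s x _ => simp

lemma getLastD_fromRuns (d g : ℕ) (M) (hg : 0 < g) :
    (fromRuns (M ++ [(d, g)])).getLastD 0 = d := by
  rw [getLastD_eq_reverse_headD, fromRuns_reverse]
  simpa using headD_fromRuns d g M.reverse hg

lemma goodR_congr_snd (L1 L2 : List (ℕ × ℕ)) (hf : L1.map Prod.fst = L2.map Prod.fst)
    (h2 : ∀ p ∈ L2, 0 < p.2) (hC : L1.Chain' (fun p q => p.1 ≠ q.1)) : GoodR L2 := by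
  refine ⟨h2, ?_⟩
  have := (List.isChain_map Prod.fst).mpr hC
  rw [hf] at this
  exact (List.isChain_map Prod.fst).mp this

lemma diffW_of_clos {a b : ℕ} {z : List ℕ} (h : DiffW a b (clos a b z)) : DiffW a b z := by
  rcases eq_or_ne z [] with rfl | hz
  · exact ⟨by simp [rle], by simp [rle]⟩
  obtain ⟨c, n, R, hG, hn, rfl⟩ := exists_runs_ne z hz
  rcases List.eq_nil_or_concat R with rfl | ⟨M, ⟨d, g⟩, rfl⟩
  · -- single run
    have hrle : rle (fromRuns [(c, n)]) = [n] := by rw [rle_fromRuns _ hG]; rfl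
    obtain ⟨e, he⟩ : ∃ e : ℕ, e = if a < n then b - n else 0 := ⟨_, rfl⟩
    have hpre : (if a < (rle (fromRuns [(c,n)])).headD 0 then
        List.replicate (b - (rle (fromRuns [(c,n)])).headD 0) ((fromRuns [(c,n)]).headD 0)
        else []) = List.replicate e c := by
      rw [hrle, headD_fromRuns c n [] hn]
      rw [List.headD_cons, he]
      split <;> simp
    have hsuf : (if a < (rle (fromRuns [(c,n)])).getLastD 0 then
        List.replicate (b - (rle (fromRuns [(c,n)])).getLastD 0) ((fromRuns [(c,n)]).getLastD 0)
        else []) = List.replicate e c := by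
      have hl : (fromRuns [(c, n)]).getLastD 0 = c := by
        simpa using getLastD_fromRuns c n [] hn
      rw [hrle, hl]
      simp only [List.getLastD_cons, List.getLastD_nil, he]
      split <;> simp
    have hclos : clos a b (fromRuns [(c, n)]) = fromRuns [(c, e + n + e)] := by
      rw [clos, hpre, hsuf]
      simp only [fromRuns_cons, fromRuns_nil, List.append_nil, List.replicate_add,
        List.append_assoc]
    have hG2 : GoodR [(c, e + n + e)] := ⟨by rintro ⟨p1, p2⟩ hp; simp at hp; omega, by simp [List.Chain']⟩
    have hrc : rle (clos a b (fromRuns [(c, n)])) = [e + n + e] := by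
      rw [hclos, rle_fromRuns _ hG2]; rfl
    constructor
    · intro t ht
      rw [hrle] at ht
      simp at ht
      have := h.1 (e + n + e) (by rw [hrc]; simp)
      omega
    · intro t ht
      rw [hrle] at ht
      simp at ht
  · -- at least two runs
    simp only [List.concat_eq_append] at h hG hz ⊢
    have hg : 0 < g := hG.1 (d, g) (by simp)
    have hrle : rle (fromRuns ((c, n) :: (M ++ [(d, g)]))) =
        n :: ((M.map Prod.snd) ++ [g]) := by
      rw [rle_fromRuns _ hG]; simp
    obtain ⟨e1, he1⟩ : ∃ e : ℕ, e = if a < n then b - n else 0 := ⟨_, rfl⟩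
    obtain ⟨e2, he2⟩ : ∃ e : ℕ, e = if a < g then b - g else 0 := ⟨_, rfl⟩
    have hheadw : (fromRuns ((c, n) :: (M ++ [(d, g)]))).headD 0 = c :=
      headD_fromRuns c n _ hn
    have hlastw : (fromRuns ((c, n) :: (M ++ [(d, g)]))).getLastD 0 = d := by
      have : (c, n) :: (M ++ [(d, g)]) = ((c, n) :: M) ++ [(d, g)] := by simp
      rw [this]
      exact getLastD_fromRuns d g _ hg
    have hheadr : (rle (fromRuns ((c, n) :: (M ++ [(d, g)])))).headD 0 = n := by
      rw [hrle]; rfl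
    have hlastr : (rle (fromRuns ((c, n) :: (M ++ [(d, g)])))).getLastD 0 = g := by
      rw [hrle]
      rw [getLastD_eq_reverse_headD]
      simp
    have hclos : clos a b (fromRuns ((c, n) :: (M ++ [(d, g)]))) =
        fromRuns ((c, e1 + n) :: (M ++ [(d, g + e2)])) := by
      rw [clos, hheadw, hlastw, hheadr, hlastr]
      have h1 : (if a < n then List.replicate (b - n) c else []) = List.replicate e1 c := by
        rw [he1]; split <;> simp
      have h2 : (if a < g then List.replicate (b - g) d else []) = List.replicate e2 d := by
        rw [he2]; split <;> simp
      rw [h1, h2]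
      simp only [fromRuns_cons, fromRuns_append, fromRuns_nil, List.append_nil,
        List.replicate_add, List.append_assoc]
    have hG2 : GoodR ((c, e1 + n) :: (M ++ [(d, g + e2)])) := by
      apply goodR_congr_snd ((c, n) :: (M ++ [(d, g)]))
      · simp
      · intro p hp
        simp at hp
        rcases hp with rfl | hp | rfl
        · simp; omega
        · exact hG.1 p (by simp [hp])
        · simp; omega
      · exact hG.2
    have hrc : rle (clos a b (fromRuns ((c, n) :: (M ++ [(d, g)])))) =
        (e1 + n) :: ((M.map Prod.snd) ++ [g + e2]) := by
      rw [hclos, rle_fromRuns _ hG2]; simp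
    have hint : ∀ t ∈ M.map Prod.snd, t = a ∨ t = b := by
      intro t ht
      apply h.2
      rw [hrc]
      simpa using ht
    constructor
    · intro t ht
      rw [hrle] at ht
      simp only [List.mem_cons, List.mem_append, List.mem_singleton, List.not_mem_nil, or_false] at ht
      rcases ht with h1 | ht2 | h1
      · have h2 := h.1 (e1 + n) (by rw [hrc]; simp)
        omega
      · exact h.1 t (by rw [hrc]; simp [ht2])
      · have h2 := h.1 (g + e2) (by rw [hrc]; simp)
        omega
    · intro t ht
      rw [hrle] at ht
      simp only [List.drop_one, List.tail_cons] at ht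
      rw [List.dropLast_append_of_ne_nil] at ht
      · apply hint
        simpa using ht
      · simp



section ASM
variable {a b : ℕ}

lemma trimFL_single (b n : ℕ) : trimL b (trimF b [n]) = if n < b then [] else [n] := by
  rw [trimF_cons]
  split <;> simp [trimL_singleton, *]

lemma ASM_B1 (hab : a < b) (t : List ℕ) (m P : ℕ) (hm : m ≤ P) (hPb : P ≤ b) :
    ∃ w ∈ ([[], [a], [b], [a,a], [b,b], [a,b], [b,a]] : List (List ℕ)),
      trimL b (trimF b (P :: t)) = w ++ trimL b (trimF b (m :: t)) := by
  by_cases hP : P < b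
  · have hm' : m < b := lt_of_le_of_lt hm hP
    exact ⟨[], by simp, by simp [trimF_cons, hP, hm']⟩
  · have hPeq : P = b := by omega
    by_cases hmb : m < b
    · refine ⟨[b], by simp, ?_⟩
      rcases eq_or_ne t [] with rfl | ht
      · rw [trimF_cons, if_neg hP, trimL_singleton, if_neg hP, trimF_cons, if_pos hmb]
        simp [hPeq]
      · rw [trimF_cons, if_neg hP, trimL_cons _ _ _ ht, trimF_cons, if_pos hmb]
        simp [hPeq]
    · have hmeq : m = b := by omega
      refine ⟨[], by simp, ?_⟩
      rw [trimF_cons, if_neg hP, trimF_cons, if_neg hmb, hPeq, hmeq]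
      simp

lemma ASM_B2 (hab : a < b) (t : List ℕ) (j m P : ℕ) (hj : j < b) (hm : m ≤ P) (hPb : P ≤ b)
    (hint : t ≠ [] → P = a ∨ P = b) :
    ∃ w ∈ ([[], [a], [b], [a,a], [b,b], [a,b], [b,a]] : List (List ℕ)),
      trimL b (trimF b (j :: P :: t)) = w ++ trimL b (trimF b (m :: t)) := by
  rw [trimF_cons, if_pos hj]
  rcases eq_or_ne t [] with rfl | ht
  · rw [trimL_singleton, trimFL_single]
    by_cases hmb : m < b
    · by_cases hP : P < b
      · exact ⟨[], by simp, by simp [hP, hmb]⟩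
      · refine ⟨[b], by simp, ?_⟩
        rw [if_neg hP, if_pos hmb]
        have : P = b := by omega
        simp [this]
    · have hmeq : m = b := by omega
      have hPeq : P = b := by omega
      refine ⟨[], by simp, ?_⟩
      rw [if_neg hmb, hPeq, hmeq, if_neg (lt_irrefl b)]
      simp
  · have hPab := hint ht
    rw [trimL_cons _ _ _ ht, trimF_cons]
    by_cases hmb : m < b
    · refine ⟨[P], by rcases hPab with rfl | rfl <;> simp, ?_⟩
      rw [if_pos hmb]
      simp
    · have hmeq : m = b := by omega
      have hPeq : P = b := by omega
      refine ⟨[], by simp, ?_⟩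
      rw [if_neg hmb, trimL_cons _ _ _ ht, hPeq, hmeq]
      simp

lemma ASM_D1 (hab : a < b) (s t : List ℕ) (n m P : ℕ) (hn : 0 < n) (hm : 0 < m)
    (hnm : n + m ≤ P) (hPb : P ≤ b) (hint : s ≠ [] → t ≠ [] → P = a ∨ P = b) :
    ∃ w ∈ ([[], [a], [b], [a,a], [b,b], [a,b], [b,a]] : List (List ℕ)),
      trimL b (trimF b (s ++ P :: t)) =
        trimL b (trimF b (s ++ [n])) ++ w ++ trimL b (trimF b (m :: t)) := by
  have hnb : n < b := by omega
  have hmb : m < b := by omega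
  rcases eq_or_ne s [] with rfl | hs
  · simp only [List.nil_append]
    rw [trimFL_single, if_pos hnb, trimF_cons b m t, if_pos hmb]
    rcases eq_or_ne t [] with rfl | ht
    · rw [trimFL_single]
      by_cases hP : P < b
      · exact ⟨[], by simp, by simp [hP]⟩
      · have hPeq : P = b := by omega
        refine ⟨[b], by simp, ?_⟩
        rw [if_neg hP, hPeq]
        simp
    · by_cases hP : P < b
      · exact ⟨[], by simp, by simp [trimF_cons, hP]⟩
      · have hPeq : P = b := by omega
        refine ⟨[b], by simp, ?_⟩
        rw [trimF_cons, if_neg hP, trimL_cons _ _ _ ht, hPeq]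
        simp
  · rw [trimF_append _ _ _ hs, trimF_append _ _ _ hs, trimL_concat, if_pos hnb,
      List.append_nil, trimF_cons b m t, if_pos hmb]
    rcases eq_or_ne t [] with rfl | ht
    · rw [trimL_concat]
      by_cases hP : P < b
      · exact ⟨[], by simp, by simp [hP]⟩
      · have hPeq : P = b := by omega
        refine ⟨[b], by simp, ?_⟩
        rw [if_neg hP, hPeq]
        simp
    · have hPab := hint hs ht
      rw [trimL_append _ _ _ (by simp : (P :: t) ≠ []), trimL_cons _ _ _ ht]
      exact ⟨[P], by rcases hPab with rfl | rfl <;> simp, by simp⟩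

lemma ASM_D2 (hab : a < b) (s t : List ℕ) (n m P1 P2 : ℕ) (hn : n ≤ P1) (hP1 : P1 ≤ b)
    (hm : m ≤ P2) (hP2 : P2 ≤ b) (hi1 : s ≠ [] → P1 = a ∨ P1 = b)
    (hi2 : t ≠ [] → P2 = a ∨ P2 = b) :
    ∃ w ∈ ([[], [a], [b], [a,a], [b,b], [a,b], [b,a]] : List (List ℕ)),
      trimL b (trimF b (s ++ P1 :: P2 :: t)) =
        trimL b (trimF b (s ++ [n])) ++ w ++ trimL b (trimF b (m :: t)) := by
  rcases eq_or_ne s [] with rfl | hs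
  · simp only [List.nil_append]
    rw [trimFL_single, trimF_cons (b := b) (p := P1)]
    rcases eq_or_ne t [] with rfl | ht
    · rw [trimF_cons]
      by_cases hP1b : P1 < b <;> by_cases hP2b : P2 < b
      · -- P1<b, P2<b
        have hnb : n < b := by omega
        have hmb : m < b := by omega
        refine ⟨[], by simp, ?_⟩
        rw [if_pos hP1b, if_pos hnb, if_pos hmb, trimL_singleton, if_pos hP2b]
        simp
      · have hnb : n < b := by omega
        by_cases hmb : m < b
        · refine ⟨[b], by simp, ?_⟩
          rw [if_pos hP1b, if_pos hnb, if_pos hmb, trimL_singleton, if_neg hP2b]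
          have : P2 = b := by omega
          simp [this]
        · refine ⟨[], by simp, ?_⟩
          have hm2 : m = b := by omega
          have hP2e : P2 = b := by omega
          rw [if_pos hP1b, if_pos hnb, if_neg hmb, trimL_singleton, if_neg hP2b, hP2e, hm2]
          simp [trimL_singleton]
      · have hmb : m < b := by omega
        have hP1e : P1 = b := by omega
        rw [if_neg hP1b, if_pos hmb, show (P1 :: P2 :: ([] : List ℕ)) = [P1] ++ [P2] from rfl,
          trimL_concat, if_pos hP2b, List.append_nil]
        by_cases hnb : n < b
        · exact ⟨[b], by simp, by rw [if_pos hnb, hP1e]; simp⟩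
        · have hne : n = b := by omega
          refine ⟨[], by simp, ?_⟩
          rw [if_neg hnb, hne, hP1e]
          simp
      · have hP1e : P1 = b := by omega
        have hP2e : P2 = b := by omega
        rw [if_neg hP1b, show (P1 :: P2 :: ([] : List ℕ)) = [P1] ++ [P2] from rfl,
          trimL_concat, if_neg hP2b]
        by_cases hnb : n < b <;> by_cases hmb : m < b
        · refine ⟨[b, b], by simp, ?_⟩
          rw [if_pos hnb, if_pos hmb, hP1e, hP2e]
          simp
        · have hme : m = b := by omega
          refine ⟨[b], by simp, ?_⟩
          rw [if_pos hnb, if_neg hmb, hme, hP1e, hP2e]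
          simp [trimL_singleton]
        · have hne : n = b := by omega
          refine ⟨[b], by simp, ?_⟩
          rw [if_neg hnb, if_pos hmb, hne, hP1e, hP2e]
          simp
        · have hne : n = b := by omega
          have hme : m = b := by omega
          refine ⟨[], by simp, ?_⟩
          rw [if_neg hnb, if_neg hmb, hne, hme, hP1e, hP2e]
          simp [trimL_singleton]
    · -- s = [], t ≠ []
      have hP2ab := hi2 ht
      rw [trimF_cons (b := b) (p := m)]
      by_cases hP1b : P1 < b <;> by_cases hmb : m < b
      · have hnb : n < b := by omega
        refine ⟨[P2], by rcases hP2ab with rfl | rfl <;> simp, ?_⟩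
        rw [if_pos hP1b, if_pos hnb, if_pos hmb, trimL_cons _ _ _ ht]
        simp
      · have hnb : n < b := by omega
        have hme : m = b := by omega
        have hP2e : P2 = b := by omega
        refine ⟨[], by simp, ?_⟩
        rw [if_pos hP1b, if_pos hnb, if_neg hmb, trimL_cons _ _ _ ht, trimL_cons _ _ _ ht,
          hP2e, hme]
        simp
      · have hP1e : P1 = b := by omega
        rw [if_neg hP1b, if_pos hmb, trimL_cons _ _ _ (by simp : (P2 :: t) ≠ []),
          trimL_cons _ _ _ ht]
        by_cases hnb : n < b
        · refine ⟨[b, P2], by rcases hP2ab with rfl | rfl <;> simp, ?_⟩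
          rw [if_pos hnb, hP1e]
          simp
        · have hne : n = b := by omega
          refine ⟨[P2], by rcases hP2ab with rfl | rfl <;> simp, ?_⟩
          rw [if_neg hnb, hne, hP1e]
          simp
      · have hP1e : P1 = b := by omega
        have hme : m = b := by omega
        have hP2e : P2 = b := by omega
        rw [if_neg hP1b, if_neg hmb, trimL_cons _ _ _ (by simp : (P2 :: t) ≠ []),
          trimL_cons _ _ _ ht, trimL_cons _ _ _ ht]
        by_cases hnb : n < b
        · refine ⟨[b], by simp, ?_⟩
          rw [if_pos hnb, hP1e, hP2e, hme]
          simp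
        · have hne : n = b := by omega
          refine ⟨[], by simp, ?_⟩
          rw [if_neg hnb, hne, hP1e, hP2e, hme]
          simp
  · -- s ≠ []
    have hP1ab := hi1 hs
    rw [trimF_append _ _ _ hs, trimF_append _ _ _ hs, trimL_concat, trimF_cons]
    rcases eq_or_ne t [] with rfl | ht
    · rw [show (P1 :: P2 :: ([] : List ℕ)) = [P1] ++ [P2] from rfl, ← List.append_assoc,
        trimL_concat]
      by_cases hnb : n < b <;> by_cases hmb : m < b
      · rw [if_pos hnb, if_pos hmb]
        by_cases hP2b : P2 < b
        · refine ⟨[P1], by rcases hP1ab with rfl | rfl <;> simp, ?_⟩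
          rw [if_pos hP2b]
          simp
        · have hP2e : P2 = b := by omega
          refine ⟨[P1, b], by rcases hP1ab with rfl | rfl <;> simp, ?_⟩
          rw [if_neg hP2b, hP2e]
          simp
      · have hme : m = b := by omega
        have hP2e : P2 = b := by omega
        refine ⟨[P1], by rcases hP1ab with rfl | rfl <;> simp, ?_⟩
        rw [if_pos hnb, if_neg hmb, if_neg (by omega : ¬ P2 < b), hP2e, hme]
        simp [trimL_singleton]
      · have hne : n = b := by omega
        have hP1e : P1 = b := by omega
        rw [if_neg hnb, if_pos hmb, hne, hP1e]
        by_cases hP2b : P2 < b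
        · refine ⟨[], by simp, ?_⟩
          rw [if_pos hP2b]
          simp
        · have hP2e : P2 = b := by omega
          refine ⟨[b], by simp, ?_⟩
          rw [if_neg hP2b, hP2e]
          simp
      · have hne : n = b := by omega
        have hme : m = b := by omega
        have hP1e : P1 = b := by omega
        have hP2e : P2 = b := by omega
        refine ⟨[], by simp, ?_⟩
        rw [if_neg hnb, if_neg hmb, if_neg (by omega : ¬ P2 < b), hne, hme, hP1e, hP2e]
        simp [trimL_singleton]
    · have hP2ab := hi2 ht
      rw [trimL_append _ _ _ (by simp : (P1 :: P2 :: t) ≠ []),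
        trimL_cons _ _ _ (by simp : (P2 :: t) ≠ []), trimL_cons _ _ _ ht]
      by_cases hnb : n < b <;> by_cases hmb : m < b
      · refine ⟨[P1, P2], by rcases hP1ab with rfl | rfl <;> rcases hP2ab with rfl | rfl <;>
          simp, ?_⟩
        rw [if_pos hnb, if_pos hmb]
        simp
      · have hme : m = b := by omega
        have hP2e : P2 = b := by omega
        refine ⟨[P1], by rcases hP1ab with rfl | rfl <;> simp, ?_⟩
        rw [if_pos hnb, if_neg hmb, trimL_cons _ _ _ ht, hP2e, hme]
        simp
      · have hne : n = b := by omega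
        have hP1e : P1 = b := by omega
        refine ⟨[P2], by rcases hP2ab with rfl | rfl <;> simp, ?_⟩
        rw [if_neg hnb, if_pos hmb, hne, hP1e]
        simp
      · have hne : n = b := by omega
        have hme : m = b := by omega
        have hP1e : P1 = b := by omega
        have hP2e : P2 = b := by omega
        refine ⟨[], by simp, ?_⟩
        rw [if_neg hnb, if_neg hmb, trimL_cons _ _ _ ht, hne, hme, hP1e, hP2e]
        simp

end ASM



lemma rle_eq_of_runs {z : List ℕ} {R} (hG : GoodR R) (hz : z = fromRuns R) :
    rle z = R.map Prod.snd := by rw [hz, rle_fromRuns R hG]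

lemma goodR_cons (c k : ℕ) (R) (hk : 0 < k) (hR : GoodR R)
    (hhead : ∀ p ∈ R.head?, c ≠ p.1) : GoodR ((c, k) :: R) := by
  refine ⟨?_, List.isChain_cons.mpr ⟨hhead, hR.2⟩⟩
  intro p hp
  rcases List.mem_cons.mp hp with rfl | hp
  · exact hk
  · exact hR.1 p hp

lemma goodR_replaceHead (c k k' : ℕ) (R) (hk : 0 < k') (hR : GoodR ((c, k) :: R)) :
    GoodR ((c, k') :: R) := by
  refine goodR_cons c k' R hk ⟨fun p hp => hR.1 p (by simp [hp]), hR.2.tail⟩ ?_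
  exact fun p hp => (List.isChain_cons.mp hR.2).1 p hp

lemma interior_mem {s t : List ℕ} {z : ℕ} {l : List ℕ} (hl : l = s ++ z :: t) (hs : s ≠ [])
    (ht : t ≠ []) : z ∈ (l.drop 1).dropLast := by
  subst hl
  cases s with
  | nil => exact absurd rfl hs
  | cons p s' =>
    rw [List.cons_append, List.drop_one, List.tail_cons,
      List.dropLast_append_of_ne_nil (by simp), List.dropLast_cons_of_ne_nil ht]
    simp

lemma seven_cases {a b : ℕ} {x : List ℕ} (hab : a < b)
    (hx : x ∈ ([[], [a], [b], [a,a], [b,b], [a,b], [b,a]] : List (List ℕ))) :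
    x = [] ∨ (∃ e, (e = a ∨ e = b) ∧ x = [e]) ∨ (∃ e, (e = a ∨ e = b) ∧ x = [e, e]) ∨
      (∃ e f, e ≠ f ∧ (e = a ∨ e = b) ∧ (f = a ∨ f = b) ∧ x = [e, f]) := by
  have hne : a ≠ b := hab.ne
  simp only [List.mem_cons, List.mem_singleton, List.not_mem_nil, or_false] at hx
  rcases hx with rfl | rfl | rfl | rfl | rfl | rfl | rfl
  · exact Or.inl rfl
  · exact Or.inr (Or.inl ⟨a, Or.inl rfl, rfl⟩)
  · exact Or.inr (Or.inl ⟨b, Or.inr rfl, rfl⟩)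
  · exact Or.inr (Or.inr (Or.inl ⟨a, Or.inl rfl, rfl⟩))
  · exact Or.inr (Or.inr (Or.inl ⟨b, Or.inr rfl, rfl⟩))
  · exact Or.inr (Or.inr (Or.inr ⟨a, b, hne, Or.inl rfl, Or.inr rfl, rfl⟩))
  · exact Or.inr (Or.inr (Or.inr ⟨b, a, hne.symm, Or.inr rfl, Or.inl rfl, rfl⟩))

lemma caseB {a b : ℕ} (ha : 3 ≤ a) (hab : a < b) (x v : List ℕ)
    (hx : x ∈ ([[], [a], [b], [a,a], [b,b], [a,b], [b,a]] : List (List ℕ)))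
    (hW : WordOver a b (x ++ v)) (hD : DiffW a b (x ++ v)) (hv : v ≠ []) :
    ∃ w ∈ ([[], [a], [b], [a,a], [b,b], [a,b], [b,a]] : List (List ℕ)),
      derW b (x ++ v) = w ++ derW b v := by
  obtain ⟨d, m, B, hGv, hm, hveq⟩ := exists_runs_ne v hv
  set t : List ℕ := B.map Prod.snd with htdef
  have hrlev : rle v = m :: t := by
    rw [rle_eq_of_runs hGv hveq]; simp [htdef]
  have hBhead : ∀ p ∈ B.head?, d ≠ p.1 := (List.isChain_cons.mp hGv.2).1
  rcases seven_cases hab hx with rfl | ⟨e, he, rfl⟩ | ⟨e, he, rfl⟩ | ⟨e, f, hef, he, hf, rfl⟩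
  · exact ⟨[], by simp, by simp⟩
  · -- x = [e]
    by_cases hed : e = d
    · subst hed
      have hG2 : GoodR ((e, 1 + m) :: B) := goodR_replaceHead e m (1 + m) B (by omega) hGv
      have hzeq : [e] ++ v = fromRuns ((e, 1 + m) :: B) := by
        rw [hveq]; simp [List.replicate_succ, Nat.add_comm 1 m]
      have hrle : rle ([e] ++ v) = (1 + m) :: t := by
        rw [rle_eq_of_runs hG2 hzeq]; simp [htdef]
      have hPb : 1 + m ≤ b := hD.1 (1 + m) (by rw [hrle]; simp)
      obtain ⟨w, hw7, hw⟩ := ASM_B1 hab t m (1 + m) (by omega) hPb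
      refine ⟨w, hw7, ?_⟩
      rw [derW_eq, derW_eq, hrle, hrlev]
      exact hw
    · have hG2 : GoodR ((e, 1) :: (d, m) :: B) :=
        goodR_cons e 1 _ one_pos hGv (by simpa using hed)
      have hzeq : [e] ++ v = fromRuns ((e, 1) :: (d, m) :: B) := by
        rw [hveq]; simp
      have hrle : rle ([e] ++ v) = 1 :: m :: t := by
        rw [rle_eq_of_runs hG2 hzeq]; simp [htdef]
      have hPb : m ≤ b := hD.1 m (by rw [hrle]; simp)
      have hint : t ≠ [] → m = a ∨ m = b := by
        intro ht
        exact hD.2 m (interior_mem (s := [1]) (by rw [hrle]; rfl) (by simp) ht)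
      obtain ⟨w, hw7, hw⟩ := ASM_B2 hab t 1 m m (by omega) le_rfl hPb hint
      refine ⟨w, hw7, ?_⟩
      rw [derW_eq, derW_eq, hrle, hrlev]
      exact hw
  · -- x = [e, e]
    by_cases hed : e = d
    · subst hed
      have hG2 : GoodR ((e, 2 + m) :: B) := goodR_replaceHead e m (2 + m) B (by omega) hGv
      have hzeq : [e, e] ++ v = fromRuns ((e, 2 + m) :: B) := by
        rw [hveq]
        have : 2 + m = 1 + (1 + m) := by omega
        simp [this, List.replicate_add, List.replicate_succ]
      have hrle : rle ([e, e] ++ v) = (2 + m) :: t := by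
        rw [rle_eq_of_runs hG2 hzeq]; simp [htdef]
      have hPb : 2 + m ≤ b := hD.1 (2 + m) (by rw [hrle]; simp)
      obtain ⟨w, hw7, hw⟩ := ASM_B1 hab t m (2 + m) (by omega) hPb
      refine ⟨w, hw7, ?_⟩
      rw [derW_eq, derW_eq, hrle, hrlev]
      exact hw
    · have hG2 : GoodR ((e, 2) :: (d, m) :: B) :=
        goodR_cons e 2 _ (by omega) hGv (by simpa using hed)
      have hzeq : [e, e] ++ v = fromRuns ((e, 2) :: (d, m) :: B) := by
        rw [hveq]; simp [List.replicate_succ]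
      have hrle : rle ([e, e] ++ v) = 2 :: m :: t := by
        rw [rle_eq_of_runs hG2 hzeq]; simp [htdef]
      have hPb : m ≤ b := hD.1 m (by rw [hrle]; simp)
      have hint : t ≠ [] → m = a ∨ m = b := by
        intro ht
        exact hD.2 m (interior_mem (s := [2]) (by rw [hrle]; rfl) (by simp) ht)
      obtain ⟨w, hw7, hw⟩ := ASM_B2 hab t 2 m m (by omega) le_rfl hPb hint
      refine ⟨w, hw7, ?_⟩
      rw [derW_eq, derW_eq, hrle, hrlev]
      exact hw
  · -- x = [e, f], e ≠ f
    by_cases hfd : f = d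
    · subst hfd
      have hG2 : GoodR ((e, 1) :: (f, 1 + m) :: B) := by
        refine goodR_cons e 1 _ one_pos ?_ (by simpa using hef)
        exact goodR_replaceHead f m (1 + m) B (by omega) hGv
      have hzeq : [e, f] ++ v = fromRuns ((e, 1) :: (f, 1 + m) :: B) := by
        rw [hveq]; simp [List.replicate_succ, Nat.add_comm 1 m]
      have hrle : rle ([e, f] ++ v) = 1 :: (1 + m) :: t := by
        rw [rle_eq_of_runs hG2 hzeq]; simp [htdef]
      have hPb : 1 + m ≤ b := hD.1 (1 + m) (by rw [hrle]; simp)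
      have hint : t ≠ [] → 1 + m = a ∨ 1 + m = b := by
        intro ht
        exact hD.2 (1 + m) (interior_mem (s := [1]) (by rw [hrle]; rfl) (by simp) ht)
      obtain ⟨w, hw7, hw⟩ := ASM_B2 hab t 1 m (1 + m) (by omega) (by omega) hPb hint
      refine ⟨w, hw7, ?_⟩
      rw [derW_eq, derW_eq, hrle, hrlev]
      exact hw
    · -- contradiction via interior run of length 1
      have hG2 : GoodR ((e, 1) :: (f, 1) :: (d, m) :: B) := by
        refine goodR_cons e 1 _ one_pos ?_ (by simpa using hef)
        exact goodR_cons f 1 _ one_pos hGv (by simpa using hfd)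
      have hzeq : [e, f] ++ v = fromRuns ((e, 1) :: (f, 1) :: (d, m) :: B) := by
        rw [hveq]; simp
      have hrle : rle ([e, f] ++ v) = 1 :: 1 :: m :: t := by
        rw [rle_eq_of_runs hG2 hzeq]; simp [htdef]
      have h1 : (1 : ℕ) = a ∨ (1 : ℕ) = b :=
        hD.2 1 (interior_mem (s := [1]) (t := m :: t) (by rw [hrle]; rfl) (by simp) (by simp))
      omega

set_option maxRecDepth 8000


lemma goodR_glue {A B mid : List (ℕ × ℕ)} {c n d m : ℕ}
    (hA : GoodR (A ++ [(c, n)])) (hB : GoodR ((d, m) :: B))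
    (hpos : ∀ p ∈ mid, 0 < p.2) (hchain : mid.Chain' (fun p q => p.1 ≠ q.1))
    (hhead : ∃ k, mid.head? = some (c, k)) (hlast : ∃ k, mid.getLast? = some (d, k)) :
    GoodR (A ++ (mid ++ B)) := by
  obtain ⟨k1, hk1⟩ := hhead
  obtain ⟨k2, hk2⟩ := hlast
  have hmidne : mid ≠ [] := by intro h; rw [h] at hk1; simp at hk1
  constructor
  · intro p hp
    rcases List.mem_append.mp hp with hp | hp
    · exact hA.1 p (by simp [hp])
    · rcases List.mem_append.mp hp with hp | hp
      · exact hpos p hp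
      · exact hB.1 p (by simp [hp])
  · have hAc := List.isChain_append.mp hA.2
    apply List.isChain_append.mpr
    refine ⟨hAc.1, ?_, ?_⟩
    · apply List.isChain_append.mpr
      refine ⟨hchain, hB.2.tail, ?_⟩
      intro p hp q hq
      rw [hk2] at hp
      simp at hp
      subst hp
      have hBh : B.head? = some q := hq
      have := (List.isChain_cons.mp hB.2).1 q hBh
      exact this
    · intro p hp q hq
      rw [List.head?_append, hk1] at hq
      simp at hq
      subst hq
      have := hAc.2.2 p hp (c, n) (by simp)
      exact this

lemma caseD {a b : ℕ} (ha : 3 ≤ a) (hab : a < b) (x u v : List ℕ)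
    (hx : x ∈ ([[], [a], [b], [a,a], [b,b], [a,b], [b,a]] : List (List ℕ)))
    (hD : DiffW a b (u ++ x ++ v)) (hu : u ≠ []) (hv : v ≠ []) :
    ∃ w ∈ ([[], [a], [b], [a,a], [b,b], [a,b], [b,a]] : List (List ℕ)),
      derW b (u ++ x ++ v) = derW b u ++ w ++ derW b v := by
  -- last run of u
  obtain ⟨c, n, R', hGur, hn, hueq'⟩ := exists_runs_ne u.reverse (by simpa using hu)
  have hueq : u = fromRuns (R'.reverse ++ [(c, n)]) := by
    have h1 : u = (fromRuns ((c, n) :: R')).reverse := by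
      rw [← hueq', List.reverse_reverse]
    rw [h1, fromRuns_reverse]
    simp
  set A : List (ℕ × ℕ) := R'.reverse with hAdef
  have hGu : GoodR (A ++ [(c, n)]) := by
    have := goodR_reverse hGur
    simpa [hAdef] using this
  set s : List ℕ := A.map Prod.snd with hsdef
  have hrleu : rle u = s ++ [n] := by
    rw [rle_eq_of_runs hGu hueq]; simp [hsdef]
  -- first run of v
  obtain ⟨d, m, B, hGv, hm, hveq⟩ := exists_runs_ne v hv
  set t : List ℕ := B.map Prod.snd with htdef
  have hrlev : rle v = m :: t := by
    rw [rle_eq_of_runs hGv hveq]; simp [htdef]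
  rcases seven_cases hab hx with rfl | ⟨e, he, rfl⟩ | ⟨e, he, rfl⟩ | ⟨e, f, hef, he, hf, rfl⟩
  · -- x = []
    by_cases hdc : d = c
    · subst hdc
      have hG : GoodR (A ++ ([(d, n + m)] ++ B)) :=
        goodR_glue hGu hGv (by simp; all_goals omega) (by simp [List.Chain']) ⟨n + m, by simp⟩ ⟨n + m, by simp⟩
      have hzeq : u ++ [] ++ v = fromRuns (A ++ ([(d, n + m)] ++ B)) := by
        rw [hueq, hveq]
        simp only [fromRuns_append, fromRuns_cons, fromRuns_nil, List.append_nil, List.nil_append,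
            List.append_assoc, List.cons_append, List.singleton_append, List.replicate_one, List.replicate_zero,
            List.replicate_add, List.replicate_succ']
      have hrle : rle (u ++ [] ++ v) = s ++ (n + m) :: t := by
        rw [rle_eq_of_runs hG hzeq]; simp [hsdef, htdef]
      obtain ⟨w, hw7, hw⟩ := ASM_D1 hab s t n m (n + m) hn hm le_rfl
        (hD.1 (n + m) (by rw [hrle]; all_goals simp))
        (fun hs ht => hD.2 (n + m) (interior_mem hrle hs ht))
      exact ⟨w, hw7, by rw [derW_eq, derW_eq, derW_eq, hrle, hrleu, hrlev]; exact hw⟩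
    · have hG : GoodR (A ++ ([(c, n), (d, m)] ++ B)) :=
        goodR_glue hGu hGv (by simp; all_goals omega) (by simp [List.Chain', Ne.symm hdc])
          ⟨n, by simp⟩ ⟨m, by simp⟩
      have hzeq : u ++ [] ++ v = fromRuns (A ++ ([(c, n), (d, m)] ++ B)) := by
        rw [hueq, hveq]
        simp only [fromRuns_append, fromRuns_cons, fromRuns_nil, List.append_nil, List.nil_append,
            List.append_assoc, List.cons_append, List.singleton_append, List.replicate_one, List.replicate_zero,
            List.replicate_add, List.replicate_succ']
      have hrle : rle (u ++ [] ++ v) = s ++ n :: m :: t := by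
        rw [rle_eq_of_runs hG hzeq]; simp [hsdef, htdef]
      obtain ⟨w, hw7, hw⟩ := ASM_D2 hab s t n m n m le_rfl
        (hD.1 n (by rw [hrle]; all_goals simp)) le_rfl (hD.1 m (by rw [hrle]; all_goals simp))
        (fun hs => hD.2 n (interior_mem hrle hs (by simp)))
        (fun ht => hD.2 m (interior_mem (s := s ++ [n])
          (by rw [hrle]; all_goals simp) (by simp) ht))
      exact ⟨w, hw7, by rw [derW_eq, derW_eq, derW_eq, hrle, hrleu, hrlev]; exact hw⟩
  · -- x = [e]
    by_cases hce : c = e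
    · subst hce
      by_cases hdc : d = c
      · subst hdc
        have hG : GoodR (A ++ ([(d, n + 1 + m)] ++ B)) :=
          goodR_glue hGu hGv (by simp; all_goals omega) (by simp [List.Chain'])
            ⟨n + 1 + m, by simp⟩ ⟨n + 1 + m, by simp⟩
        have hzeq : u ++ [d] ++ v = fromRuns (A ++ ([(d, n + 1 + m)] ++ B)) := by
          rw [hueq, hveq]
          simp only [fromRuns_append, fromRuns_cons, fromRuns_nil, List.append_nil, List.nil_append,
            List.append_assoc, List.cons_append, List.singleton_append, List.replicate_one, List.replicate_zero,
            List.replicate_add, List.replicate_succ']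
        have hrle : rle (u ++ [d] ++ v) = s ++ (n + 1 + m) :: t := by
          rw [rle_eq_of_runs hG hzeq]; simp [hsdef, htdef]
        obtain ⟨w, hw7, hw⟩ := ASM_D1 hab s t n m (n + 1 + m) hn hm (by omega)
          (hD.1 (n + 1 + m) (by rw [hrle]; all_goals simp))
          (fun hs ht => hD.2 (n + 1 + m) (interior_mem hrle hs ht))
        exact ⟨w, hw7, by rw [derW_eq, derW_eq, derW_eq, hrle, hrleu, hrlev]; exact hw⟩
      · have hG : GoodR (A ++ ([(c, n + 1), (d, m)] ++ B)) :=
          goodR_glue hGu hGv (by simp; all_goals omega) (by simp [List.Chain', Ne.symm hdc])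
            ⟨n + 1, by simp⟩ ⟨m, by simp⟩
        have hzeq : u ++ [c] ++ v = fromRuns (A ++ ([(c, n + 1), (d, m)] ++ B)) := by
          rw [hueq, hveq]
          simp only [fromRuns_append, fromRuns_cons, fromRuns_nil, List.append_nil, List.nil_append,
            List.append_assoc, List.cons_append, List.singleton_append, List.replicate_one, List.replicate_zero,
            List.replicate_add, List.replicate_succ']
        have hrle : rle (u ++ [c] ++ v) = s ++ (n + 1) :: m :: t := by
          rw [rle_eq_of_runs hG hzeq]; simp [hsdef, htdef]
        obtain ⟨w, hw7, hw⟩ := ASM_D2 hab s t n m (n + 1) m (by omega)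
          (hD.1 (n + 1) (by rw [hrle]; all_goals simp)) le_rfl (hD.1 m (by rw [hrle]; all_goals simp))
          (fun hs => hD.2 (n + 1) (interior_mem hrle hs (by simp)))
          (fun ht => hD.2 m (interior_mem (s := s ++ [n + 1])
            (by rw [hrle]; all_goals simp) (by simp) ht))
        exact ⟨w, hw7, by rw [derW_eq, derW_eq, derW_eq, hrle, hrleu, hrlev]; exact hw⟩
    · by_cases hde : d = e
      · subst hde
        have hG : GoodR (A ++ ([(c, n), (d, 1 + m)] ++ B)) :=
          goodR_glue hGu (goodR_replaceHead d m (1 + m) B (by omega) hGv)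
            (by simp; all_goals omega) (by simp [List.Chain', hce]) ⟨n, by simp⟩ ⟨1 + m, by simp⟩
        have hzeq : u ++ [d] ++ v = fromRuns (A ++ ([(c, n), (d, 1 + m)] ++ B)) := by
          rw [hueq, hveq]
          simp only [fromRuns_append, fromRuns_cons, fromRuns_nil, List.append_nil, List.nil_append,
            List.append_assoc, List.cons_append, List.singleton_append, List.replicate_one, List.replicate_zero,
            List.replicate_add, List.replicate_succ']
        have hrle : rle (u ++ [d] ++ v) = s ++ n :: (1 + m) :: t := by
          rw [rle_eq_of_runs hG hzeq]; simp [hsdef, htdef]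
        obtain ⟨w, hw7, hw⟩ := ASM_D2 hab s t n m n (1 + m) le_rfl
          (hD.1 n (by rw [hrle]; all_goals simp)) (by omega) (hD.1 (1 + m) (by rw [hrle]; all_goals simp))
          (fun hs => hD.2 n (interior_mem hrle hs (by simp)))
          (fun ht => hD.2 (1 + m) (interior_mem (s := s ++ [n])
            (by rw [hrle]; all_goals simp) (by simp) ht))
        exact ⟨w, hw7, by rw [derW_eq, derW_eq, derW_eq, hrle, hrleu, hrlev]; exact hw⟩
      · -- interior run of length 1 : contradiction
        have hG : GoodR (A ++ ([(c, n), (e, 1), (d, m)] ++ B)) :=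
          goodR_glue hGu hGv (by simp; all_goals omega)
            (by simp [List.Chain', hce, Ne.symm hde]) ⟨n, by simp⟩ ⟨m, by simp⟩
        have hzeq : u ++ [e] ++ v = fromRuns (A ++ ([(c, n), (e, 1), (d, m)] ++ B)) := by
          rw [hueq, hveq]
          simp only [fromRuns_append, fromRuns_cons, fromRuns_nil, List.append_nil, List.nil_append,
            List.append_assoc, List.cons_append, List.singleton_append, List.replicate_one, List.replicate_zero,
            List.replicate_add, List.replicate_succ']
        have hrle : rle (u ++ [e] ++ v) = s ++ n :: 1 :: m :: t := by
          rw [rle_eq_of_runs hG hzeq]; simp [hsdef, htdef]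
        have h1 : (1 : ℕ) = a ∨ (1 : ℕ) = b :=
          hD.2 1 (interior_mem (s := s ++ [n]) (t := m :: t)
            (by rw [hrle]; all_goals simp) (by simp) (by simp))
        omega
  · -- x = [e, e]
    by_cases hce : c = e
    · subst hce
      by_cases hdc : d = c
      · subst hdc
        have hG : GoodR (A ++ ([(d, n + 2 + m)] ++ B)) :=
          goodR_glue hGu hGv (by simp; all_goals omega) (by simp [List.Chain'])
            ⟨n + 2 + m, by simp⟩ ⟨n + 2 + m, by simp⟩
        have hzeq : u ++ [d, d] ++ v = fromRuns (A ++ ([(d, n + 2 + m)] ++ B)) := by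
          rw [hueq, hveq]
          rw [show n + 2 + m = n + 1 + 1 + m by omega]
          simp only [fromRuns_append, fromRuns_cons, fromRuns_nil, List.append_nil, List.nil_append,
            List.append_assoc, List.cons_append, List.singleton_append, List.replicate_one, List.replicate_zero,
            List.replicate_add, List.replicate_succ']
        have hrle : rle (u ++ [d, d] ++ v) = s ++ (n + 2 + m) :: t := by
          rw [rle_eq_of_runs hG hzeq]; simp [hsdef, htdef]
        obtain ⟨w, hw7, hw⟩ := ASM_D1 hab s t n m (n + 2 + m) hn hm (by omega)
          (hD.1 (n + 2 + m) (by rw [hrle]; all_goals simp))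
          (fun hs ht => hD.2 (n + 2 + m) (interior_mem hrle hs ht))
        exact ⟨w, hw7, by rw [derW_eq, derW_eq, derW_eq, hrle, hrleu, hrlev]; exact hw⟩
      · have hG : GoodR (A ++ ([(c, n + 2), (d, m)] ++ B)) :=
          goodR_glue hGu hGv (by simp; all_goals omega) (by simp [List.Chain', Ne.symm hdc])
            ⟨n + 2, by simp⟩ ⟨m, by simp⟩
        have hzeq : u ++ [c, c] ++ v = fromRuns (A ++ ([(c, n + 2), (d, m)] ++ B)) := by
          rw [hueq, hveq]
          rw [show n + 2 = n + 1 + 1 by omega]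
          simp only [fromRuns_append, fromRuns_cons, fromRuns_nil, List.append_nil, List.nil_append,
            List.append_assoc, List.cons_append, List.singleton_append, List.replicate_one, List.replicate_zero,
            List.replicate_add, List.replicate_succ']
        have hrle : rle (u ++ [c, c] ++ v) = s ++ (n + 2) :: m :: t := by
          rw [rle_eq_of_runs hG hzeq]; simp [hsdef, htdef]
        obtain ⟨w, hw7, hw⟩ := ASM_D2 hab s t n m (n + 2) m (by omega)
          (hD.1 (n + 2) (by rw [hrle]; all_goals simp)) le_rfl (hD.1 m (by rw [hrle]; all_goals simp))
          (fun hs => hD.2 (n + 2) (interior_mem hrle hs (by simp)))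
          (fun ht => hD.2 m (interior_mem (s := s ++ [n + 2])
            (by rw [hrle]; all_goals simp) (by simp) ht))
        exact ⟨w, hw7, by rw [derW_eq, derW_eq, derW_eq, hrle, hrleu, hrlev]; exact hw⟩
    · by_cases hde : d = e
      · subst hde
        have hG : GoodR (A ++ ([(c, n), (d, 2 + m)] ++ B)) :=
          goodR_glue hGu (goodR_replaceHead d m (2 + m) B (by omega) hGv)
            (by simp; all_goals omega) (by simp [List.Chain', hce]) ⟨n, by simp⟩ ⟨2 + m, by simp⟩
        have hzeq : u ++ [d, d] ++ v = fromRuns (A ++ ([(c, n), (d, 2 + m)] ++ B)) := by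
          rw [hueq, hveq]
          rw [show 2 + m = 1 + (1 + m) by omega]
          simp only [fromRuns_append, fromRuns_cons, fromRuns_nil, List.append_nil, List.nil_append,
            List.append_assoc, List.cons_append, List.singleton_append, List.replicate_one, List.replicate_zero,
            List.replicate_add, List.replicate_succ']
        have hrle : rle (u ++ [d, d] ++ v) = s ++ n :: (2 + m) :: t := by
          rw [rle_eq_of_runs hG hzeq]; simp [hsdef, htdef]
        obtain ⟨w, hw7, hw⟩ := ASM_D2 hab s t n m n (2 + m) le_rfl
          (hD.1 n (by rw [hrle]; all_goals simp)) (by omega) (hD.1 (2 + m) (by rw [hrle]; all_goals simp))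
          (fun hs => hD.2 n (interior_mem hrle hs (by simp)))
          (fun ht => hD.2 (2 + m) (interior_mem (s := s ++ [n])
            (by rw [hrle]; all_goals simp) (by simp) ht))
        exact ⟨w, hw7, by rw [derW_eq, derW_eq, derW_eq, hrle, hrleu, hrlev]; exact hw⟩
      · have hG : GoodR (A ++ ([(c, n), (e, 2), (d, m)] ++ B)) :=
          goodR_glue hGu hGv (by simp; all_goals omega)
            (by simp [List.Chain', hce, Ne.symm hde]) ⟨n, by simp⟩ ⟨m, by simp⟩
        have hzeq : u ++ [e, e] ++ v = fromRuns (A ++ ([(c, n), (e, 2), (d, m)] ++ B)) := by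
          rw [hueq, hveq]
          simp only [fromRuns_append, fromRuns_cons, fromRuns_nil, List.append_nil, List.nil_append,
            List.append_assoc, List.cons_append, List.singleton_append, List.replicate_one, List.replicate_zero,
            List.replicate_add, List.replicate_succ']
        have hrle : rle (u ++ [e, e] ++ v) = s ++ n :: 2 :: m :: t := by
          rw [rle_eq_of_runs hG hzeq]; simp [hsdef, htdef]
        have h1 : (2 : ℕ) = a ∨ (2 : ℕ) = b :=
          hD.2 2 (interior_mem (s := s ++ [n]) (t := m :: t)
            (by rw [hrle]; all_goals simp) (by simp) (by simp))
        omega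
  · -- x = [e, f]
    by_cases hce : c = e
    · subst hce
      by_cases hdf : d = f
      · subst hdf
        have hcd : c ≠ d := hef
        have hG : GoodR (A ++ ([(c, n + 1), (d, 1 + m)] ++ B)) :=
          goodR_glue hGu (goodR_replaceHead d m (1 + m) B (by omega) hGv)
            (by simp; all_goals omega) (by simp [List.Chain', hcd]) ⟨n + 1, by simp⟩ ⟨1 + m, by simp⟩
        have hzeq : u ++ [c, d] ++ v = fromRuns (A ++ ([(c, n + 1), (d, 1 + m)] ++ B)) := by
          rw [hueq, hveq]
          simp only [fromRuns_append, fromRuns_cons, fromRuns_nil, List.append_nil, List.nil_append,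
            List.append_assoc, List.cons_append, List.singleton_append, List.replicate_one, List.replicate_zero,
            List.replicate_add, List.replicate_succ']
        have hrle : rle (u ++ [c, d] ++ v) = s ++ (n + 1) :: (1 + m) :: t := by
          rw [rle_eq_of_runs hG hzeq]; simp [hsdef, htdef]
        obtain ⟨w, hw7, hw⟩ := ASM_D2 hab s t n m (n + 1) (1 + m) (by omega)
          (hD.1 (n + 1) (by rw [hrle]; all_goals simp)) (by omega)
          (hD.1 (1 + m) (by rw [hrle]; all_goals simp))
          (fun hs => hD.2 (n + 1) (interior_mem hrle hs (by simp)))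
          (fun ht => hD.2 (1 + m) (interior_mem (s := s ++ [n + 1])
            (by rw [hrle]; all_goals simp) (by simp) ht))
        exact ⟨w, hw7, by rw [derW_eq, derW_eq, derW_eq, hrle, hrleu, hrlev]; exact hw⟩
      · have hG : GoodR (A ++ ([(c, n + 1), (f, 1), (d, m)] ++ B)) :=
          goodR_glue hGu hGv (by simp; all_goals omega)
            (by simp [List.Chain', hef, Ne.symm hdf]) ⟨n + 1, by simp⟩ ⟨m, by simp⟩
        have hzeq : u ++ [c, f] ++ v = fromRuns (A ++ ([(c, n + 1), (f, 1), (d, m)] ++ B)) := by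
          rw [hueq, hveq]
          simp only [fromRuns_append, fromRuns_cons, fromRuns_nil, List.append_nil, List.nil_append,
            List.append_assoc, List.cons_append, List.singleton_append, List.replicate_one, List.replicate_zero,
            List.replicate_add, List.replicate_succ']
        have hrle : rle (u ++ [c, f] ++ v) = s ++ (n + 1) :: 1 :: m :: t := by
          rw [rle_eq_of_runs hG hzeq]; simp [hsdef, htdef]
        have h1 : (1 : ℕ) = a ∨ (1 : ℕ) = b :=
          hD.2 1 (interior_mem (s := s ++ [n + 1]) (t := m :: t)
            (by rw [hrle]; all_goals simp) (by simp) (by simp))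
        omega
    · by_cases hdf : d = f
      · subst hdf
        have hG : GoodR (A ++ ([(c, n), (e, 1), (d, 1 + m)] ++ B)) :=
          goodR_glue hGu (goodR_replaceHead d m (1 + m) B (by omega) hGv)
            (by simp; all_goals omega) (by simp [List.Chain', hce, hef]) ⟨n, by simp⟩ ⟨1 + m, by simp⟩
        have hzeq : u ++ [e, d] ++ v =
            fromRuns (A ++ ([(c, n), (e, 1), (d, 1 + m)] ++ B)) := by
          rw [hueq, hveq]
          simp only [fromRuns_append, fromRuns_cons, fromRuns_nil, List.append_nil, List.nil_append,
            List.append_assoc, List.cons_append, List.singleton_append, List.replicate_one, List.replicate_zero,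
            List.replicate_add, List.replicate_succ']
        have hrle : rle (u ++ [e, d] ++ v) = s ++ n :: 1 :: (1 + m) :: t := by
          rw [rle_eq_of_runs hG hzeq]; simp [hsdef, htdef]
        have h1 : (1 : ℕ) = a ∨ (1 : ℕ) = b :=
          hD.2 1 (interior_mem (s := s ++ [n]) (t := (1 + m) :: t)
            (by rw [hrle]; all_goals simp) (by simp) (by simp))
        omega
      · have hG : GoodR (A ++ ([(c, n), (e, 1), (f, 1), (d, m)] ++ B)) :=
          goodR_glue hGu hGv (by simp; all_goals omega)
            (by simp [List.Chain', hce, hef, Ne.symm hdf]) ⟨n, by simp⟩ ⟨m, by simp⟩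
        have hzeq : u ++ [e, f] ++ v =
            fromRuns (A ++ ([(c, n), (e, 1), (f, 1), (d, m)] ++ B)) := by
          rw [hueq, hveq]
          simp only [fromRuns_append, fromRuns_cons, fromRuns_nil, List.append_nil, List.nil_append,
            List.append_assoc, List.cons_append, List.singleton_append, List.replicate_one, List.replicate_zero,
            List.replicate_add, List.replicate_succ']
        have hrle : rle (u ++ [e, f] ++ v) = s ++ n :: 1 :: 1 :: m :: t := by
          rw [rle_eq_of_runs hG hzeq]; simp [hsdef, htdef]
        have h1 : (1 : ℕ) = a ∨ (1 : ℕ) = b :=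
          hD.2 1 (interior_mem (s := s ++ [n]) (t := 1 :: m :: t)
            (by rw [hrle]; all_goals simp) (by simp) (by simp))
        omega



lemma tail_dropLast_comm (l : List ℕ) : l.dropLast.tail = l.tail.dropLast := by
  cases l with
  | nil => rfl
  | cons p r =>
    rcases eq_or_ne r [] with rfl | hr
    · rfl
    · rw [List.tail_cons, List.dropLast_cons_of_ne_nil hr, List.tail_cons]

lemma interior_reverse (r : List ℕ) :
    ((r.reverse).drop 1).dropLast = ((r.drop 1).dropLast).reverse := by
  rw [List.drop_one, List.tail_reverse, List.dropLast_reverse, List.drop_one,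
    tail_dropLast_comm]

lemma diffW_reverse {a b : ℕ} {z : List ℕ} (h : DiffW a b z) : DiffW a b z.reverse := by
  constructor
  · intro t ht
    rw [rle_reverse] at ht
    exact h.1 t (List.mem_reverse.mp ht)
  · intro t ht
    rw [rle_reverse, interior_reverse] at ht
    exact h.2 t (List.mem_reverse.mp ht)

lemma seven_rev {a b : ℕ} {w : List ℕ}
    (hw : w ∈ ([[], [a], [b], [a,a], [b,b], [a,b], [b,a]] : List (List ℕ))) :
    w.reverse ∈ ([[], [a], [b], [a,a], [b,b], [a,b], [b,a]] : List (List ℕ)) := by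
  simp only [List.mem_cons, List.mem_singleton, List.not_mem_nil, or_false] at hw ⊢
  rcases hw with rfl | rfl | rfl | rfl | rfl | rfl | rfl <;> simp

lemma seven_rev_mem {a b : ℕ} {x : List ℕ}
    (hx : x ∈ ([[], [a], [b], [a,a], [b,b], [a,b], [b,a]] : List (List ℕ))) :
    x.reverse ∈ ([[], [a], [b], [a,a], [b,b], [a,b], [b,a]] : List (List ℕ)) := seven_rev hx

lemma derW_seven {a b : ℕ} (ha : 3 ≤ a) (hab : a < b) {x : List ℕ}
    (hx : x ∈ ([[], [a], [b], [a,a], [b,b], [a,b], [b,a]] : List (List ℕ))) :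
    derW b x = [] := by
  rcases seven_cases hab hx with rfl | ⟨e, he, rfl⟩ | ⟨e, he, rfl⟩ | ⟨e, f, hef, he, hf, rfl⟩
  · rfl
  · have h1 : rle [e] = [1] := by
      rw [rle_eq_of_runs (R := [(e, 1)]) ⟨by simp, by simp [List.Chain']⟩ (by simp)]; rfl
    rw [derW_eq, h1, trimFL_single, if_pos (by omega)]
  · have h1 : rle [e, e] = [2] := by
      rw [rle_eq_of_runs (R := [(e, 2)]) ⟨by simp, by simp [List.Chain']⟩
        (by simp [List.replicate_succ])]
      rfl
    rw [derW_eq, h1, trimFL_single, if_pos (by omega)]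
  · have h1 : rle [e, f] = [1, 1] := by
      rw [rle_eq_of_runs (R := [(e, 1), (f, 1)]) ⟨by simp, by simp [List.Chain', hef]⟩ (by simp)]; rfl
    rw [derW_eq, h1, trimF_cons, if_pos (by omega), trimL_singleton, if_pos (by omega)]

theorem stmt12 (a b : ℕ) (ha : 3 ≤ a) (hab : a < b) (u x v : List ℕ)
    (hx : x ∈ ([[], [a], [b], [a,a], [b,b], [a,b], [b,a]] : List (List ℕ)))
    (h : SmoothW a b (u ++ x ++ v)) :
    ∃ w ∈ ([[], [a], [b], [a,a], [b,b], [a,b], [b,a]] : List (List ℕ)),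
      derW b (u ++ x ++ v) = derW b u ++ w ++ derW b v := by
  have hW : WordOver a b (u ++ x ++ v) := h.1
  have hD : DiffW a b (u ++ x ++ v) := diffW_of_clos (by simpa using h.2.1 0)
  by_cases hv : v = []
  · subst hv
    by_cases hu : u = []
    · subst hu
      refine ⟨[], by simp, ?_⟩
      have h1 := derW_seven ha hab hx
      have h0 : derW b ([] : List ℕ) = [] := rfl
      simp [h1, h0]
    · -- v = [], u ≠ [] : reverse and use caseB
      have hx' := seven_rev_mem hx
      have hrev : x.reverse ++ u.reverse = (u ++ x).reverse := (List.reverse_append (as := u) (bs := x)).symm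
      have hW' : WordOver a b (x.reverse ++ u.reverse) := by
        rw [hrev]
        intro c hc
        exact hW c (by simpa using List.mem_reverse.mp hc)
      have hD' : DiffW a b (x.reverse ++ u.reverse) := by
        rw [hrev]
        exact diffW_reverse (by simpa using hD)
      obtain ⟨w, hw7, hw⟩ := caseB ha hab x.reverse u.reverse hx' hW' hD'
        (by simpa using hu)
      rw [hrev, derW_reverse, derW_reverse] at hw
      have key : derW b (u ++ x) = derW b u ++ w.reverse := by
        have := congrArg List.reverse hw
        rw [List.reverse_reverse, List.reverse_append, List.reverse_reverse] at this
        exact this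
      refine ⟨w.reverse, seven_rev hw7, ?_⟩
      have h0 : derW b ([] : List ℕ) = [] := rfl
      simpa [h0] using key
  · by_cases hu : u = []
    · subst hu
      obtain ⟨w, hw7, hw⟩ := caseB ha hab x v hx (by simpa using hW) (by simpa using hD) hv
      exact ⟨w, hw7, by simpa using hw⟩
    · exact caseD ha hab x u v hx hD hu hv
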